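/- Let n≥1 and let G be a graph with n² vertices α₀,…,α_{n²−1}. Let 𝔄 be the structure of empty signature with domain A={0,…,n−1}, and let X be the team over variables (v₁,v₂,r₁,r₂,m,e) consisting of the assignments s_i^j for 0≤i≤n²−1 and 0≤j≤i, where: (s_i^j(v₁),s_i^j(v₂)) is the base-n representation of i (i.e., s_i^j(v₁)=⌊i/n⌋, s_i^j(v₂)=i mod n); (s_i^j(r₁),s_i^j(r₂)) is the base-n representation of j; s_i^j(m)=1 if i=j and 0 otherwise; and s_i^j(e)=1 if i=j or there is an edge between α_j and α_i (with i>j), and 0 otherwise. Then G is n-colorable if and only if 𝔄⊨_X ∃x (dep(x,r₁,r₂,e,m) ∧ dep(v₁,v₂,x)). -/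

import Mathlib

/- Statement 8.  Let n ≥ 1 and let G be a graph with n² vertices
α₀, …, α_{n²−1}.  Let 𝔄 be the structure of empty signature with domain
A = {0, …, n−1} (modelled as `Fin n`) and let X be the team over variables
(v₁, v₂, r₁, r₂, m, e) consisting of the assignments s_i^j for
0 ≤ i ≤ n²−1, 0 ≤ j ≤ i described below.  Then G is n-colorable iff
𝔄 ⊨_X ∃x (dep(x,r₁,r₂,e,m) ∧ dep(v₁,v₂,x)). -/

/-- The six team variables (v₁, v₂, r₁, r₂, m, e). -/
inductive V6 : Type where
  | v1 | v2 | r1 | r2 | m | e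
deriving DecidableEq

open Fin.NatCast in
open scoped Classical in
/-- The assignment `s_i^j` (for `j ≤ i < n²`):
`(v₁,v₂)` is the base-`n` representation of `i`, `(r₁,r₂)` that of `j`,
`m = 1` iff `i = j`, and `e = 1` iff `i = j` or there is an edge between
`α_j` and `α_i`. -/
noncomputable def row (n : ℕ) [NeZero n] (G : SimpleGraph (Fin (n ^ 2)))
    (i j : ℕ) (hi : i < n ^ 2) (hj : j ≤ i) : V6 → Fin n := fun v =>
  match v with
  | .v1 => (↑(i / n) : Fin n)
  | .v2 => (↑(i % n) : Fin n)
  | .r1 => (↑(j / n) : Fin n)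
  | .r2 => (↑(j % n) : Fin n)
  | .m => if i = j then 1 else 0
  | .e => if i = j ∨ G.Adj ⟨j, lt_of_le_of_lt hj hi⟩ ⟨i, hi⟩ then 1 else 0

/-- The team `X = {s_i^j : 0 ≤ j ≤ i ≤ n² − 1}`. -/
def colTeam (n : ℕ) [NeZero n] (G : SimpleGraph (Fin (n ^ 2))) :
    Set (V6 → Fin n) :=
  {s | ∃ (i j : ℕ) (hi : i < n ^ 2) (hj : j ≤ i), s = row n G i j hi hj}

open Fin.NatCast in
lemma decode_aux (n : ℕ) [NeZero n] {i i' : ℕ} (hi : i < n ^ 2) (hi' : i' < n ^ 2)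
    (h1 : ((i / n : ℕ) : Fin n) = ((i' / n : ℕ) : Fin n))
    (h2 : ((i % n : ℕ) : Fin n) = ((i' % n : ℕ) : Fin n)) : i = i' := by
  have hn : 0 < n := Nat.pos_of_ne_zero (NeZero.ne n)
  have hsq : n ^ 2 = n * n := sq n
  have hd : i / n < n := Nat.div_lt_of_lt_mul (by omega)
  have hd' : i' / n < n := Nat.div_lt_of_lt_mul (by omega)
  have hm : i % n < n := Nat.mod_lt _ hn
  have hm' : i' % n < n := Nat.mod_lt _ hn
  have e1 : i / n = i' / n := by
    have := congrArg Fin.val h1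
    rwa [Fin.val_cast_of_lt hd, Fin.val_cast_of_lt hd'] at this
  have e2 : i % n = i' % n := by
    have := congrArg Fin.val h2
    rwa [Fin.val_cast_of_lt hm, Fin.val_cast_of_lt hm'] at this
  rw [← Nat.div_add_mod i n, ← Nat.div_add_mod i' n, e1, e2]

/-- `G` is `n`-colorable iff
`𝔄 ⊨_X ∃x (dep(x,r₁,r₂,e,m) ∧ dep(v₁,v₂,x))`, where the lax team semantics
of the existential quantifier (extending each assignment `s ∈ X` by a
nonempty set `F s` of values for `x`) and of the dependence atoms are spelled
out explicitly on the extended team of pairs `(s, a)` with `s ∈ X`,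
`a ∈ F s`. -/
theorem n_colorable_iff_teamSat (n : ℕ) [NeZero n]
    (G : SimpleGraph (Fin (n ^ 2))) :
    (∃ c : Fin (n ^ 2) → Fin n, ∀ u v : Fin (n ^ 2), G.Adj u v → c u ≠ c v)
      ↔ ∃ F : (V6 → Fin n) → Set (Fin n),
          (∀ s ∈ colTeam n G, (F s).Nonempty) ∧
          -- dep(x, r₁, r₂, e, m)
          (∀ s ∈ colTeam n G, ∀ a ∈ F s, ∀ s' ∈ colTeam n G, ∀ a' ∈ F s',
            a = a' → s V6.r1 = s' V6.r1 → s V6.r2 = s' V6.r2 →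
            s V6.e = s' V6.e → s V6.m = s' V6.m) ∧
          -- dep(v₁, v₂, x)
          (∀ s ∈ colTeam n G, ∀ a ∈ F s, ∀ s' ∈ colTeam n G, ∀ a' ∈ F s',
            s V6.v1 = s' V6.v1 → s V6.v2 = s' V6.v2 → a = a') := by
  constructor
  · rintro ⟨c, hc⟩
    refine ⟨fun s => {a | ∃ (i j : ℕ) (hi : i < n ^ 2) (hj : j ≤ i),
        s = row n G i j hi hj ∧ a = c ⟨i, hi⟩}, ?_, ?_, ?_⟩
    · rintro s ⟨i, j, hi, hj, rfl⟩
      exact ⟨c ⟨i, hi⟩, i, j, hi, hj, rfl, rfl⟩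
    · rintro s _ a ⟨i, j, hi, hj, rfl, rfl⟩ s' _ a' ⟨i', j', hi', hj', rfl, rfl⟩
        haa hr1 hr2 he
      have hj2 : j < n ^ 2 := lt_of_le_of_lt hj hi
      have hj2' : j' < n ^ 2 := lt_of_le_of_lt hj' hi'
      have hjj : j = j' := decode_aux n hj2 hj2' (by simpa [row] using hr1)
        (by simpa [row] using hr2)
      subst hjj
      rcases Nat.lt_or_ge n 2 with hn1 | hn2
      · have hn : n = 1 := by
          have := Nat.pos_of_ne_zero (NeZero.ne n); omega
        subst hn
        exact Subsingleton.elim _ _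
      · have : Nontrivial (Fin n) := Fin.nontrivial_iff_two_le.mpr hn2
        by_cases h1 : i = j <;> by_cases h2 : i' = j
        · simp [row, h1, h2]
        · exfalso
          have he1 : row n G i j hi hj V6.e = 1 := by simp [row, h1]
          have he2 : row n G i' j hi' hj' V6.e = 1 := by rw [← he, he1]
          have hcond : i' = j ∨ G.Adj ⟨j, lt_of_le_of_lt hj' hi'⟩ ⟨i', hi'⟩ := by
            by_contra hcon
            simp only [row, if_neg hcon] at he2
            exact absurd (congrArg Fin.val he2) (by simp [Fin.val_one', Nat.mod_eq_of_lt (show 1 < n by omega)])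
          rcases hcond with h | h
          · exact h2 h
          · have : (⟨j, lt_of_le_of_lt hj' hi'⟩ : Fin (n ^ 2)) = ⟨i, hi⟩ := by
              exact Fin.ext h1.symm
            rw [this] at h
            exact hc _ _ h haa
        · exfalso
          have he2 : row n G i' j hi' hj' V6.e = 1 := by simp [row, h2]
          have he1 : row n G i j hi hj V6.e = 1 := by rw [he, he2]
          have hcond : i = j ∨ G.Adj ⟨j, lt_of_le_of_lt hj hi⟩ ⟨i, hi⟩ := by
            by_contra hcon
            simp only [row, if_neg hcon] at he1
            exact absurd (congrArg Fin.val he1) (by simp [Fin.val_one', Nat.mod_eq_of_lt (show 1 < n by omega)])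
          rcases hcond with h | h
          · exact h1 h
          · have : (⟨j, lt_of_le_of_lt hj hi⟩ : Fin (n ^ 2)) = ⟨i', hi'⟩ :=
              Fin.ext h2.symm
            rw [this] at h
            exact hc _ _ h haa.symm
        · simp [row, h1, h2]
    · rintro s _ a ⟨i, j, hi, hj, rfl, rfl⟩ s' _ a' ⟨i', j', hi', hj', rfl, rfl⟩
        hv1 hv2
      have : i = i' := decode_aux n hi hi' (by simpa [row] using hv1)
        (by simpa [row] using hv2)
      subst this
      rfl
  · rintro ⟨F, hne, hdep1, hdep2⟩
    have hmem : ∀ v : Fin (n ^ 2),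
        row n G v.val v.val v.isLt le_rfl ∈ colTeam n G :=
      fun v => ⟨v.val, v.val, v.isLt, le_rfl, rfl⟩
    set c : Fin (n ^ 2) → Fin n :=
      fun v => (hne _ (hmem v)).choose with hcdef
    have hcmem : ∀ v : Fin (n ^ 2), c v ∈ F (row n G v.val v.val v.isLt le_rfl) :=
      fun v => (hne _ (hmem v)).choose_spec
    have key : ∀ (i j : ℕ) (hi : i < n ^ 2) (hj : j ≤ i),
        ∀ a ∈ F (row n G i j hi hj), a = c ⟨i, hi⟩ := by
      intro i j hi hj a ha
      exact hdep2 _ ⟨i, j, hi, hj, rfl⟩ a ha _ (hmem ⟨i, hi⟩) _ (hcmem ⟨i, hi⟩)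
        rfl rfl
    refine ⟨c, ?_⟩
    have main : ∀ u v : Fin (n ^ 2), G.Adj u v → u.val < v.val → c u ≠ c v := by
      intro u v hadj hlt heq
      rcases Nat.lt_or_ge n 2 with hn1 | hn2
      · have hn : n = 1 := by
          have := Nat.pos_of_ne_zero (NeZero.ne n); omega
        have h1 : n ^ 2 = 1 := by rw [hn]; norm_num
        have := u.isLt; have := v.isLt
        omega
      have : Nontrivial (Fin n) := Fin.nontrivial_iff_two_le.mpr hn2
      obtain ⟨a, ha⟩ := hne _ (⟨v.val, u.val, v.isLt, le_of_lt hlt, rfl⟩ :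
        row n G v.val u.val v.isLt (le_of_lt hlt) ∈ colTeam n G)
      have hav : a = c v := by
        have := key v.val u.val v.isLt (le_of_lt hlt) a ha
        rwa [Fin.eta] at this
      have hm := hdep1 _ (⟨v.val, u.val, v.isLt, le_of_lt hlt, rfl⟩ :
          row n G v.val u.val v.isLt (le_of_lt hlt) ∈ colTeam n G) a ha
        _ (hmem u) (c u) (hcmem u) (by rw [hav, heq]) rfl rfl ?_
      · have hvu : v.val ≠ u.val := Nat.ne_of_gt hlt
        simp only [row, if_neg hvu, if_pos rfl] at hm
        exact absurd (congrArg Fin.val hm) (by simp [Fin.val_one', Nat.mod_eq_of_lt (show 1 < n by omega)])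
      · have hadj' : G.Adj ⟨u.val, lt_of_le_of_lt (le_of_lt hlt) v.isLt⟩
            ⟨v.val, v.isLt⟩ := by
          simpa [Fin.eta] using hadj
        simp [row, hadj']
    intro u v hadj
    have huv : u.val ≠ v.val := fun h => G.ne_of_adj hadj (Fin.ext h)
    rcases Nat.lt_or_ge u.val v.val with h | h
    · exact main u v hadj h
    · have h' : v.val < u.val := by omega
      exact fun heq => main v u hadj.symm h' heq.symm
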